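/- If A is an n×n complex matrix with ρ(Ā·A) < 1, then for every Hermitian matrix X the conjugate Stein equation C_A(X) := X − A^H X̄ A has the explicit series solution, and the inverse operator C_A^{-1} is order preserving: if X ≥ Y (in the Loewner order on Hermitian matrices), then C_A^{-1}(X) ≥ C_A^{-1}(Y). -/

import Mathlib

open Matrix Filter
open scoped ComplexOrder Topology

noncomputable section

/-- Entrywise complex conjugation of a matrix. -/
def mconj {k l : ℕ} (M : Matrix (Fin k) (Fin l) ℂ) : Matrix (Fin k) (Fin l) ℂ :=
  M.map (starRingEnd ℂ)

/-- The explicit series `∑ₖ ((ĀA)^k)ᴴ (X + Aᴴ X̄ A)(ĀA)^k` for the inverse of the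
conjugate Stein operator `C_A(X) = X - Aᴴ X̄ A`. -/
def steinInv {n : ℕ} (A X : Matrix (Fin n) (Fin n) ℂ) : Matrix (Fin n) (Fin n) ℂ :=
  ∑' k : ℕ, ((mconj A * A) ^ k)ᴴ * (X + Aᴴ * mconj X * A) * (mconj A * A) ^ k

namespace SteinAux

variable {n : ℕ}

lemma mconj_apply (M : Matrix (Fin n) (Fin n) ℂ) (i j) :
    mconj M i j = starRingEnd ℂ (M i j) := rfl

lemma mconj_mul (M N : Matrix (Fin n) (Fin n) ℂ) : mconj (M * N) = mconj M * mconj N :=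
  Matrix.map_mul

lemma mconj_add (M N : Matrix (Fin n) (Fin n) ℂ) : mconj (M + N) = mconj M + mconj N := by
  ext i j; simp [mconj]

lemma mconj_sub (M N : Matrix (Fin n) (Fin n) ℂ) : mconj (M - N) = mconj M - mconj N := by
  ext i j; simp [mconj]

lemma mconj_zero : mconj (0 : Matrix (Fin n) (Fin n) ℂ) = 0 := by
  ext i j; simp [mconj]

lemma mconj_mconj (M : Matrix (Fin n) (Fin n) ℂ) : mconj (mconj M) = M := by
  ext i j; simp [mconj]

lemma mconj_conjTranspose (M : Matrix (Fin n) (Fin n) ℂ) : mconj (Mᴴ) = Mᵀ := by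
  ext i j; simp [mconj]

lemma conjTranspose_mconj (M : Matrix (Fin n) (Fin n) ℂ) : (mconj M)ᴴ = Mᵀ := by
  ext i j; simp [mconj]

lemma mconj_eq_transpose {M : Matrix (Fin n) (Fin n) ℂ} (hM : M.IsHermitian) :
    mconj M = Mᵀ := by
  rw [← hM.eq, mconj_conjTranspose, hM.eq]

lemma mconj_one : mconj (1 : Matrix (Fin n) (Fin n) ℂ) = 1 := by
  ext i j; simp [mconj, Matrix.one_apply, apply_ite]

lemma mconj_pow (M : Matrix (Fin n) (Fin n) ℂ) (k : ℕ) : mconj (M ^ k) = mconj M ^ k := by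
  induction k with
  | zero => simp [mconj_one]
  | succ k ih => rw [pow_succ, mconj_mul, ih, pow_succ]

lemma continuous_mconj : Continuous (mconj : Matrix (Fin n) (Fin n) ℂ → _) :=
  continuous_id.matrix_map continuous_star

lemma posSemidef_mconj {M : Matrix (Fin n) (Fin n) ℂ} (hM : M.PosSemidef) :
    (mconj M).PosSemidef := by
  rw [mconj_eq_transpose hM.isHermitian]; exact hM.transpose

end SteinAux

section NormBound

attribute [local instance] Matrix.frobeniusSeminormedAddCommGroup
  Matrix.frobeniusNormedAddCommGroup Matrix.frobeniusNormedRing Matrix.frobeniusNormedAlgebra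

open SteinAux

lemma exists_pow_norm_bound (n : ℕ) (B : Matrix (Fin n) (Fin n) ℂ)
    (hρ : ∀ μ ∈ spectrum ℂ B, ‖μ‖ < 1) :
    ∃ r : ℝ, 0 ≤ r ∧ r < 1 ∧ ∀ᶠ k in atTop, ‖B ^ k‖ ≤ r ^ k := by
  rcases Nat.eq_zero_or_pos n with hn | hn
  · subst hn
    refine ⟨0, le_refl _, one_pos, ?_⟩
    filter_upwards [eventually_ge_atTop 1] with k hk
    have : B ^ k = 0 := Subsingleton.elim _ _
    rw [this, norm_zero, zero_pow (by omega)]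
  · haveI : NeZero n := ⟨hn.ne'⟩
    haveI : Nontrivial (Matrix (Fin n) (Fin n) ℂ) :=
      inferInstanceAs (Nontrivial (Fin n → Fin n → ℂ))
    have hρ' : spectralRadius ℂ B < 1 := by
      have := spectrum.spectralRadius_lt_of_forall_lt B (r := 1)
        (fun z hz => by simpa [← NNReal.coe_lt_coe, coe_nnnorm] using hρ z hz)
      simpa using this
    obtain ⟨c, hc1, hc2⟩ := ENNReal.lt_iff_exists_nnreal_btwn.mp hρ'
    have hgel := spectrum.pow_nnnorm_pow_one_div_tendsto_nhds_spectralRadius B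
    have hev : ∀ᶠ k : ℕ in atTop, (‖B ^ k‖₊ : ENNReal) ^ ((1 : ℝ) / (k : ℕ)) < (c : ENNReal) :=
      hgel.eventually_lt_const hc1
    have hc1' : (c : ℝ) < 1 := by
      have := hc2
      rw [show (1 : ENNReal) = ((1 : NNReal) : ENNReal) from rfl, ENNReal.coe_lt_coe] at this
      exact_mod_cast this
    refine ⟨c, c.coe_nonneg, hc1', ?_⟩
    filter_upwards [hev, eventually_ge_atTop 1] with k hk hk1
    have hk0 : (k : ℝ) ≠ 0 := by positivity
    have h1 : (‖B ^ k‖₊ : ENNReal) ≤ (c : ENNReal) ^ k := by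
      have h2 := ENNReal.rpow_le_rpow hk.le (z := (k : ℝ)) (by positivity)
      rwa [← ENNReal.rpow_mul, one_div, inv_mul_cancel₀ hk0, ENNReal.rpow_one,
        ENNReal.rpow_natCast] at h2
    rw [← ENNReal.coe_pow, ENNReal.coe_le_coe] at h1
    calc ‖B ^ k‖ = ((‖B ^ k‖₊ : NNReal) : ℝ) := rfl
    _ ≤ ((c ^ k : NNReal) : ℝ) := by exact_mod_cast h1
    _ = (c : ℝ) ^ k := by push_cast; ring

lemma summable_key (n : ℕ) (B : Matrix (Fin n) (Fin n) ℂ)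
    (hρ : ∀ μ ∈ spectrum ℂ B, ‖μ‖ < 1) (N : Matrix (Fin n) (Fin n) ℂ) :
    Summable (fun k : ℕ => (B ^ k)ᴴ * N * B ^ k) := by
  obtain ⟨r, hr0, hr1, hev⟩ := exists_pow_norm_bound n B hρ
  apply Summable.of_norm_bounded_eventually_nat (g := fun k => ‖N‖ * (r * r) ^ k)
  · apply Summable.mul_left
    apply summable_geometric_of_lt_one (by positivity) (by nlinarith)
  · filter_upwards [hev] with k hk
    calc ‖(B ^ k)ᴴ * N * B ^ k‖ ≤ ‖(B ^ k)ᴴ‖ * ‖N‖ * ‖B ^ k‖ := by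
          refine le_trans (norm_mul_le _ _) ?_
          exact mul_le_mul_of_nonneg_right (norm_mul_le _ _) (norm_nonneg _)
    _ = ‖B ^ k‖ * ‖N‖ * ‖B ^ k‖ := by rw [Matrix.frobenius_norm_conjTranspose]
    _ ≤ ‖N‖ * (r * r) ^ k := by
          rw [mul_pow]
          have h1 : ‖B ^ k‖ * ‖B ^ k‖ ≤ r ^ k * r ^ k :=
            mul_le_mul hk hk (norm_nonneg _) (by positivity)
          nlinarith [norm_nonneg N, norm_nonneg (B ^ k)]

end NormBound

section Main

open SteinAux

variable {n : ℕ}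

/-- The additive monoid hom `N ↦ Aᴴ * N̄ * A`. -/
def conjSandwich (A : Matrix (Fin n) (Fin n) ℂ) :
    Matrix (Fin n) (Fin n) ℂ →+ Matrix (Fin n) (Fin n) ℂ where
  toFun N := Aᴴ * mconj N * A
  map_zero' := by simp [mconj_zero]
  map_add' M N := by simp [mconj_add, mul_add, add_mul]

lemma continuous_conjSandwich (A : Matrix (Fin n) (Fin n) ℂ) :
    Continuous (conjSandwich A) := by
  show Continuous fun N : Matrix (Fin n) (Fin n) ℂ => Aᴴ * mconj N * A
  exact (continuous_const.matrix_mul continuous_mconj).matrix_mul continuous_const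

lemma transpose_mconj (M : Matrix (Fin n) (Fin n) ℂ) : (mconj M)ᵀ = Mᴴ := by
  ext i j; simp [mconj]

lemma aux_left (A : Matrix (Fin n) (Fin n) ℂ) (k : ℕ) :
    Aᴴ * ((mconj A * A)ᵀ) ^ k = ((mconj A * A)ᴴ) ^ k * Aᴴ := by
  have base : Aᴴ * (mconj A * A)ᵀ = (mconj A * A)ᴴ * Aᴴ := by
    rw [transpose_mul, conjTranspose_mul, transpose_mconj, conjTranspose_mconj, mul_assoc]
  induction k with
  | zero => simp
  | succ k ih =>
    rw [pow_succ', ← mul_assoc, base, mul_assoc, ih, ← mul_assoc, ← pow_succ']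

lemma aux_right (A : Matrix (Fin n) (Fin n) ℂ) (k : ℕ) :
    (mconj (mconj A * A)) ^ k * A = A * (mconj A * A) ^ k := by
  have base : mconj (mconj A * A) * A = A * (mconj A * A) := by
    rw [mconj_mul, mconj_mconj, mul_assoc]
  induction k with
  | zero => simp
  | succ k ih =>
    rw [pow_succ, mul_assoc, base, ← mul_assoc, ih, mul_assoc, ← pow_succ]

lemma aux_mid (A X : Matrix (Fin n) (Fin n) ℂ) :
    Aᴴ * mconj (X + Aᴴ * mconj X * A) * A
      = Aᴴ * mconj X * A + (mconj A * A)ᴴ * X * (mconj A * A) := by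
  rw [mconj_add, mconj_mul, mconj_mul, mconj_mconj, mconj_conjTranspose,
    conjTranspose_mul, conjTranspose_mconj]
  simp only [mul_add, add_mul, mul_assoc]

lemma key_term (A X : Matrix (Fin n) (Fin n) ℂ) (k : ℕ) :
    Aᴴ * mconj (((mconj A * A) ^ k)ᴴ * (X + Aᴴ * mconj X * A) * (mconj A * A) ^ k) * A
      = ((mconj A * A) ^ k)ᴴ * (X + Aᴴ * mconj X * A) * (mconj A * A) ^ k
        - ((mconj A * A) ^ k)ᴴ * X * (mconj A * A) ^ k
        + ((mconj A * A) ^ (k + 1))ᴴ * X * (mconj A * A) ^ (k + 1) := by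
  have h1 : Aᴴ * mconj (((mconj A * A) ^ k)ᴴ * (X + Aᴴ * mconj X * A) * (mconj A * A) ^ k) * A
      = ((mconj A * A)ᴴ) ^ k * (Aᴴ * mconj (X + Aᴴ * mconj X * A) * A) * (mconj A * A) ^ k := by
    rw [mconj_mul, mconj_mul, mconj_conjTranspose, transpose_pow, mconj_pow]
    calc Aᴴ * (((mconj A * A)ᵀ) ^ k * mconj (X + Aᴴ * mconj X * A)
            * (mconj (mconj A * A)) ^ k) * A
        = (Aᴴ * ((mconj A * A)ᵀ) ^ k) * mconj (X + Aᴴ * mconj X * A)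
            * ((mconj (mconj A * A)) ^ k * A) := by simp only [mul_assoc]
      _ = (((mconj A * A)ᴴ) ^ k * Aᴴ) * mconj (X + Aᴴ * mconj X * A)
            * (A * (mconj A * A) ^ k) := by rw [aux_left, aux_right]
      _ = ((mconj A * A)ᴴ) ^ k * (Aᴴ * mconj (X + Aᴴ * mconj X * A) * A)
            * (mconj A * A) ^ k := by simp only [mul_assoc]
  rw [h1, aux_mid]
  have h3 : ((mconj A * A)ᴴ) ^ k
        * ((mconj A * A)ᴴ * X * (mconj A * A)) * (mconj A * A) ^ k
      = ((mconj A * A)ᴴ) ^ (k + 1) * X * (mconj A * A) ^ (k + 1) := by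
    rw [pow_succ, pow_succ']
    simp only [mul_assoc]
  simp only [mul_add, add_mul, conjTranspose_pow, h3]
  abel

lemma psd_sum {f : ℕ → Matrix (Fin n) (Fin n) ℂ} (hf : ∀ k, (f k).PosSemidef)
    (s : Finset ℕ) : (∑ k ∈ s, f k).PosSemidef := by
  classical
  induction s using Finset.induction with
  | empty => simpa using (Matrix.PosSemidef.zero (n := Fin n) (R := ℂ))
  | insert a s h ih => rw [Finset.sum_insert h]; exact (hf _).add ih

lemma psd_limit {f : ℕ → Matrix (Fin n) (Fin n) ℂ} {M : Matrix (Fin n) (Fin n) ℂ}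
    (hf : ∀ k, (f k).PosSemidef) (h : Tendsto f atTop (𝓝 M)) : M.PosSemidef := by
  rw [posSemidef_iff_dotProduct_mulVec]
  constructor
  · have h2 : Tendsto (fun k => (f k)ᴴ) atTop (𝓝 Mᴴ) :=
      ((continuous_id.matrix_conjTranspose).tendsto M).comp h
    have h3 : (fun k => (f k)ᴴ) = f := funext fun k => (hf k).1
    rw [h3] at h2
    exact tendsto_nhds_unique h2 h
  · intro x
    have hc : Continuous fun N : Matrix (Fin n) (Fin n) ℂ => star x ⬝ᵥ N *ᵥ x :=
      continuous_const.dotProduct (continuous_id.matrix_mulVec continuous_const)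
    have h4 := (hc.tendsto M).comp h
    have hcl : IsClosed {z : ℂ | 0 ≤ z} := by
      have he : {z : ℂ | 0 ≤ z} = Complex.re ⁻¹' Set.Ici 0 ∩ Complex.im ⁻¹' {0} := by
        ext z
        simp [Complex.le_def, eq_comm]
      rw [he]
      exact (isClosed_Ici.preimage Complex.continuous_re).inter
        (isClosed_singleton.preimage Complex.continuous_im)
    exact hcl.mem_of_tendsto h4 (Eventually.of_forall fun k => (hf k).dotProduct_mulVec_nonneg x)

end Main

open SteinAux

theorem stmt0 (n : ℕ) (A : Matrix (Fin n) (Fin n) ℂ)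
    (hρ : ∀ μ ∈ spectrum ℂ (mconj A * A), ‖μ‖ < 1) :
    (∀ X : Matrix (Fin n) (Fin n) ℂ, X.IsHermitian →
      steinInv A X - Aᴴ * mconj (steinInv A X) * A = X) ∧
    (∀ X Y : Matrix (Fin n) (Fin n) ℂ, X.IsHermitian → Y.IsHermitian →
      (X - Y).PosSemidef → (steinInv A X - steinInv A Y).PosSemidef) := by
  have hsum : ∀ N : Matrix (Fin n) (Fin n) ℂ,
      Summable (fun k : ℕ => ((mconj A * A) ^ k)ᴴ * N * (mconj A * A) ^ k) :=
    summable_key n (mconj A * A) hρ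
  constructor
  · intro X _hX
    set M := X + Aᴴ * mconj X * A with hM
    set q : ℕ → Matrix (Fin n) (Fin n) ℂ :=
      fun k => ((mconj A * A) ^ k)ᴴ * X * (mconj A * A) ^ k with hqdef
    have hS : HasSum (fun k : ℕ => ((mconj A * A) ^ k)ᴴ * M * (mconj A * A) ^ k)
        (steinInv A X) := (hsum M).hasSum
    have hS2 := hS.map (conjSandwich A) (continuous_conjSandwich A)
    have hterm : (⇑(conjSandwich A) ∘ fun k : ℕ =>
        ((mconj A * A) ^ k)ᴴ * M * (mconj A * A) ^ k)
        = fun k : ℕ => ((mconj A * A) ^ k)ᴴ * M * (mconj A * A) ^ k - q k + q (k + 1) := by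
      funext k
      exact key_term A X k
    rw [hterm] at hS2
    have hdiff := hS.sub hS2
    have heq : (fun k : ℕ => ((mconj A * A) ^ k)ᴴ * M * (mconj A * A) ^ k
        - (((mconj A * A) ^ k)ᴴ * M * (mconj A * A) ^ k - q k + q (k + 1)))
        = fun k => q k - q (k + 1) := by
      funext k; abel
    rw [heq] at hdiff
    have hq : Summable q := hsum X
    have hq' : Summable fun k => q (k + 1) := (summable_nat_add_iff 1).2 hq
    have h3 : Summable fun k => q k - q (k + 1) := hq.sub hq'
    have h4 := h3.hasSum
    have h5 := h4.tendsto_sum_nat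
    have h6 : (fun N : ℕ => ∑ k ∈ Finset.range N, (q k - q (k + 1)))
        = fun N => q 0 - q N := funext fun N => Finset.sum_range_sub' q N
    rw [h6] at h5
    have h7 : Tendsto (fun N : ℕ => q 0 - q N) atTop (𝓝 (q 0 - 0)) :=
      tendsto_const_nhds.sub hq.tendsto_atTop_zero
    have h8 : (∑' k, (q k - q (k + 1))) = q 0 := by
      simpa using tendsto_nhds_unique h5 h7
    have h9 : HasSum (fun k => q k - q (k + 1)) (q 0) := h8 ▸ h4
    have h10 := hdiff.unique h9
    have hq0 : q 0 = X := by simp [hqdef]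
    rw [hq0] at h10
    exact h10
  · intro X Y _hX _hY hXY
    have hSX := (hsum (X + Aᴴ * mconj X * A)).hasSum
    have hSY := (hsum (Y + Aᴴ * mconj Y * A)).hasSum
    have hd := hSX.sub hSY
    have hZterm : (fun k : ℕ =>
        ((mconj A * A) ^ k)ᴴ * (X + Aᴴ * mconj X * A) * (mconj A * A) ^ k
          - ((mconj A * A) ^ k)ᴴ * (Y + Aᴴ * mconj Y * A) * (mconj A * A) ^ k)
        = fun k : ℕ =>
        ((mconj A * A) ^ k)ᴴ * ((X - Y) + Aᴴ * mconj (X - Y) * A) * (mconj A * A) ^ k := by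
      funext k
      rw [mconj_sub]
      simp only [mul_add, add_mul, mul_sub, sub_mul]
      abel
    rw [hZterm] at hd
    have hpsd : ∀ k : ℕ, (((mconj A * A) ^ k)ᴴ * ((X - Y) + Aᴴ * mconj (X - Y) * A)
        * (mconj A * A) ^ k).PosSemidef := by
      intro k
      have h1 : ((X - Y) + Aᴴ * mconj (X - Y) * A).PosSemidef :=
        hXY.add ((posSemidef_mconj hXY).conjTranspose_mul_mul_same A)
      exact h1.conjTranspose_mul_mul_same _
    exact psd_limit (fun N => psd_sum hpsd _) hd.tendsto_sum_nat
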